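/- For nonzero x, y ∈ V, x is Birkhoff-normal to y (i.e., ‖x‖ ≤ ‖x + λy‖ for all real λ) if and only if |[x,y]| = ‖x‖·‖y‖ₐ, and this holds if and only if y is Birkhoff-normal to x with respect to the antinorm. In particular, the antinorm reverses the normality relation. -/

import Mathlib

open Module

section Aux

variable {E : Type*} [NormedAddCommGroup E] [NormedSpace ℝ E]

/-- Any vector in a 2-dimensional space is a combination of two independent vectors. -/
lemma pair_span {E : Type*} [AddCommGroup E] [Module ℝ E] (hdim : finrank ℝ E = 2)
    {u v : E} (hli : LinearIndependent ℝ ![u, v]) (z : E) :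
    ∃ a b : ℝ, z = a • u + b • v := by
  have hcard : Fintype.card (Fin 2) = finrank ℝ E := by simp [hdim]
  set B := basisOfLinearIndependentOfCardEqFinrank hli hcard with hB
  have hB0 : B 0 = u := by
    rw [hB, coe_basisOfLinearIndependentOfCardEqFinrank]; rfl
  have hB1 : B 1 = v := by
    rw [hB, coe_basisOfLinearIndependentOfCardEqFinrank]; rfl
  refine ⟨B.repr z 0, B.repr z 1, ?_⟩
  have := B.sum_repr z
  rw [Fin.sum_univ_two, hB0, hB1] at this
  exact this.symm

/-- Birkhoff: normality yields a norming functional vanishing on `v`. -/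
lemma birkhoff_exists (hdim : finrank ℝ E = 2) {u v : E}
    (hli : LinearIndependent ℝ ![u, v])
    (h : ∀ t : ℝ, ‖u‖ ≤ ‖u + t • v‖) :
    ∃ f : E →ₗ[ℝ] ℝ, (∀ z, |f z| ≤ ‖z‖) ∧ f u = ‖u‖ ∧ f v = 0 := by
  have hcard : Fintype.card (Fin 2) = finrank ℝ E := by simp [hdim]
  set B := basisOfLinearIndependentOfCardEqFinrank hli hcard with hB
  have hB0 : B 0 = u := by
    rw [hB, coe_basisOfLinearIndependentOfCardEqFinrank]; rfl
  have hB1 : B 1 = v := by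
    rw [hB, coe_basisOfLinearIndependentOfCardEqFinrank]; rfl
  refine ⟨(‖u‖ : ℝ) • B.coord 0, ?_, ?_, ?_⟩
  · intro z
    have hz := B.sum_repr z
    rw [Fin.sum_univ_two, hB0, hB1] at hz
    set a := B.repr z 0 with ha
    set b := B.repr z 1 with hb
    have hfz : ((‖u‖ : ℝ) • B.coord 0) z = ‖u‖ * a := by
      simp [Basis.coord_apply, ha]
    rw [hfz]
    rcases eq_or_ne a 0 with h0 | h0
    · simp [h0]
    · have hz2 : z = a • (u + (b / a) • v) := by
        rw [smul_add, smul_smul, mul_div_cancel₀ _ h0, ← hz]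
      calc |‖u‖ * a| = |a| * ‖u‖ := by
            rw [abs_mul, abs_norm, mul_comm]
        _ ≤ |a| * ‖u + (b / a) • v‖ := by
            apply mul_le_mul_of_nonneg_left (h _) (abs_nonneg a)
        _ = ‖z‖ := by rw [hz2, norm_smul, Real.norm_eq_abs]
  · have : B.coord 0 u = 1 := by
      rw [← hB0, Basis.coord_apply, Basis.repr_self, Finsupp.single_eq_same]
    simp [this]
  · have : B.coord 0 v = 0 := by
      rw [← hB1, Basis.coord_apply, Basis.repr_self]
      simp
    simp [this]

end Aux

/-- The antinorm associated with a norm and a symplectic form `ω`: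
`anorm ω x = sup {ω x y : ‖y‖ = 1}`. -/
noncomputable def anorm {V : Type*} [NormedAddCommGroup V] [NormedSpace ℝ V]
    (ω : V →ₗ[ℝ] V →ₗ[ℝ] ℝ) (x : V) : ℝ :=
  sSup {r : ℝ | ∃ y : V, ‖y‖ = 1 ∧ r = ω x y}

/-- Birkhoff normality: `x ⊣ y` iff `‖x‖ ≤ ‖x + t • y‖` for all `t`. -/
def BNormal {V : Type*} [NormedAddCommGroup V] [NormedSpace ℝ V] (x y : V) : Prop :=
  ∀ t : ℝ, ‖x‖ ≤ ‖x + t • y‖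

/-- Birkhoff normality with respect to an arbitrary norm-like function. -/
def NormalWith {V : Type*} [AddCommGroup V] [Module ℝ V] (N : V → ℝ) (x y : V) : Prop :=
  ∀ t : ℝ, N x ≤ N (x + t • y)

section AnormEq

variable {V : Type*} [NormedAddCommGroup V] [NormedSpace ℝ V]

/-- The antinorm equals the operator norm of `ω x`. -/
lemma anorm_eq (hdim : finrank ℝ V = 2) (ω : V →ₗ[ℝ] V →ₗ[ℝ] ℝ) (x : V) :
    haveI : FiniteDimensional ℝ V := .of_finrank_eq_succ hdim
    anorm ω x = ‖LinearMap.toContinuousLinearMap (ω x)‖ := by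
  haveI : FiniteDimensional ℝ V := .of_finrank_eq_succ hdim
  haveI : Nontrivial V := Module.nontrivial_of_finrank_pos (R := ℝ) (by rw [hdim]; norm_num)
  set W := LinearMap.toContinuousLinearMap (ω x) with hW
  have hWapp : ∀ z, W z = ω x z := fun z => by
    rw [hW, LinearMap.coe_toContinuousLinearMap']
  set S := {r : ℝ | ∃ y : V, ‖y‖ = 1 ∧ r = ω x y} with hS
  obtain ⟨w, hw⟩ := exists_ne (0 : V)
  have hu : ‖(‖w‖⁻¹ • w)‖ = 1 := by
    rw [norm_smul, norm_inv, norm_norm, inv_mul_cancel₀ (norm_ne_zero_iff.mpr hw)]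
  have hSne : S.Nonempty := ⟨ω x (‖w‖⁻¹ • w), ⟨_, hu, rfl⟩⟩
  have hSbdd : BddAbove S := by
    refine ⟨‖W‖, fun r hr => ?_⟩
    obtain ⟨y, hy1, rfl⟩ := hr
    calc ω x y ≤ |ω x y| := le_abs_self _
      _ = ‖W y‖ := by rw [hWapp, Real.norm_eq_abs]
      _ ≤ ‖W‖ * ‖y‖ := W.le_opNorm y
      _ = ‖W‖ := by rw [hy1, mul_one]
  have habs : ∀ y : V, ‖y‖ = 1 → |ω x y| ≤ sSup S := by
    intro y hy1
    rcases abs_cases (ω x y) with ⟨he, _⟩ | ⟨he, _⟩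
    · rw [he]; exact le_csSup hSbdd ⟨y, hy1, rfl⟩
    · rw [he]
      refine le_csSup hSbdd ⟨-y, by rwa [norm_neg], by simp⟩
  have hnonneg : 0 ≤ sSup S := by
    obtain ⟨r, y, hy1, rfl⟩ := hSne
    exact le_trans (abs_nonneg _) (habs y hy1)
  apply le_antisymm
  · apply csSup_le hSne
    rintro r ⟨y, hy1, rfl⟩
    calc ω x y ≤ |ω x y| := le_abs_self _
      _ = ‖W y‖ := by rw [hWapp, Real.norm_eq_abs]
      _ ≤ ‖W‖ * ‖y‖ := W.le_opNorm y
      _ = ‖W‖ := by rw [hy1, mul_one]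
  · apply W.opNorm_le_bound hnonneg
    intro y
    rcases eq_or_ne y 0 with rfl | hy
    · simp
    · have hy1 : ‖(‖y‖⁻¹ • y)‖ = 1 := by
        rw [norm_smul, norm_inv, norm_norm, inv_mul_cancel₀ (norm_ne_zero_iff.mpr hy)]
      have := habs _ hy1
      have hexp : W y = ‖y‖ * (ω x (‖y‖⁻¹ • y)) := by
        rw [hWapp, map_smul, smul_eq_mul, ← mul_assoc,
          mul_inv_cancel₀ (norm_ne_zero_iff.mpr hy), one_mul]
      rw [Real.norm_eq_abs, hexp, abs_mul, abs_of_nonneg (norm_nonneg y), mul_comm]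
      exact mul_le_mul_of_nonneg_right this (norm_nonneg y)

end AnormEq

/-- For nonzero `x, y`: `x ⊣ y` iff `|ω x y| = ‖x‖ * anorm ω y`, and this holds iff `y` is
normal to `x` with respect to the antinorm; i.e. the antinorm reverses normality. -/
theorem stmt6 {V : Type*} [NormedAddCommGroup V] [NormedSpace ℝ V]
    (hdim : Module.finrank ℝ V = 2)
    (ω : V →ₗ[ℝ] V →ₗ[ℝ] ℝ)
    (halt : ∀ x : V, ω x x = 0)
    (hnd : ∀ a : V, (∀ y : V, ω a y = 0) → a = 0) :
    ∀ x y : V, x ≠ 0 → y ≠ 0 →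
      ((BNormal x y ↔ |ω x y| = ‖x‖ * anorm ω y) ∧
       (BNormal x y ↔ NormalWith (anorm ω) y x)) := by
  haveI : FiniteDimensional ℝ V := .of_finrank_eq_succ hdim
  -- skew-symmetry
  have hskew : ∀ a b : V, ω a b = -ω b a := by
    intro a b
    have h := halt (a + b)
    simp only [map_add, LinearMap.add_apply, halt a, halt b] at h
    linarith
  set W : V → (V →L[ℝ] ℝ) := fun z => LinearMap.toContinuousLinearMap (ω z) with hWdef
  have hWapp : ∀ z w, W z w = ω z w := fun z w => by
    rw [hWdef]; rw [LinearMap.coe_toContinuousLinearMap']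
  have hanorm : ∀ z, anorm ω z = ‖W z‖ := fun z => anorm_eq hdim ω z
  -- positivity of the antinorm at nonzero points
  have hpos : ∀ z : V, z ≠ 0 → 0 < anorm ω z := by
    intro z hz
    rw [hanorm]
    rcases (norm_nonneg (W z)).lt_or_eq with h | h
    · exact h
    · exfalso
      apply hz
      apply hnd
      intro w
      have h0 : W z w = 0 := by
        have hb := (W z).le_opNorm w
        rw [← h] at hb
        simpa using hb
      rwa [hWapp] at h0
  intro x y hx hy
  rcases eq_or_ne (ω x y) 0 with hxy0 | hxy
  · -- degenerate case: y is a multiple of x, all statements false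
    obtain ⟨c, hc, hyc⟩ : ∃ c : ℝ, c ≠ 0 ∧ y = c • x := by
      by_cases hli : LinearIndependent ℝ ![x, y]
      · exfalso
        apply hx
        apply hnd
        intro z
        obtain ⟨a, b, rfl⟩ := pair_span hdim hli z
        simp [halt x, hxy0]
      · rw [LinearIndependent.pair_iff] at hli
        push_neg at hli
        obtain ⟨s, t, hst, hne⟩ := hli
        have ht : t ≠ 0 := by
          rintro rfl
          have hs : s ≠ 0 := fun h0 => hne h0 rfl
          apply hx
          have : s • x = 0 := by simpa using hst
          exact (smul_eq_zero.mp this).resolve_left hs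
        have h1 : t • y = (-s) • x := by
          rw [neg_smul, ← eq_neg_of_add_eq_zero_right hst]
        have hyeq : y = (-s / t) • x := by
          have h2 := congrArg (fun z : V => t⁻¹ • z) h1
          simp only [smul_smul, inv_mul_cancel₀ ht, one_smul] at h2
          rw [h2]
          congr 1
          rw [div_eq_inv_mul]
        refine ⟨-s / t, ?_, hyeq⟩
        intro h0
        apply hy
        rw [hyeq, h0, zero_smul]
    have hBN : ¬ BNormal x y := by
      intro h
      have hb := h (-c⁻¹)
      rw [hyc, smul_smul] at hb
      have h1 : x + (-c⁻¹ * c) • x = 0 := by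
        rw [neg_mul, inv_mul_cancel₀ hc, neg_smul, one_smul, add_neg_cancel]
      rw [h1, norm_zero] at hb
      exact hx (norm_le_zero_iff.mp hb)
    have hEq : ¬ (|ω x y| = ‖x‖ * anorm ω y) := by
      rw [hxy0, abs_zero]
      intro h
      have := mul_pos (norm_pos_iff.mpr hx) (hpos y hy)
      rw [← h] at this
      exact lt_irrefl 0 this
    have hNW : ¬ NormalWith (anorm ω) y x := by
      intro h
      have := h (-c)
      rw [hyc] at this
      have h0 : c • x + (-c) • x = (0 : V) := by
        rw [neg_smul, add_neg_cancel]
      rw [h0] at this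
      have : anorm ω (c • x) ≤ anorm ω 0 := this
      have hz : anorm ω (0 : V) = 0 := by
        rw [hanorm]
        have : W (0 : V) = 0 := by
          ext w; rw [hWapp]; simp
        rw [this, norm_zero]
      rw [hz] at this
      have := hpos y hy
      rw [hyc] at this
      linarith
    exact ⟨⟨fun h => absurd h hBN, fun h => absurd h hEq⟩,
           ⟨fun h => absurd h hBN, fun h => absurd h hNW⟩⟩
  · -- nondegenerate case: ω x y ≠ 0
    have hyx : ω y x ≠ 0 := by rw [hskew]; simpa using hxy
    have hli : LinearIndependent ℝ ![x, y] := by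
      rw [LinearIndependent.pair_iff]
      intro s t hst
      have h1 : ω (s • x + t • y) y = 0 := by rw [hst]; simp
      have h2 : ω x (s • x + t • y) = 0 := by rw [hst]; simp
      rw [map_add, map_smul, map_smul, LinearMap.add_apply, LinearMap.smul_apply,
        LinearMap.smul_apply, halt y] at h1
      rw [map_add, map_smul, map_smul, halt x] at h2
      simp only [smul_eq_mul, mul_zero, add_zero, zero_add] at h1 h2
      constructor
      · exact (mul_eq_zero.mp h1).resolve_right hxy
      · exact (mul_eq_zero.mp h2).resolve_right hxy
    -- the universal upper bound |ω x y| ≤ ‖x‖ * anorm ω y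
    have hub : |ω x y| ≤ ‖x‖ * anorm ω y := by
      rw [hanorm]
      calc |ω x y| = |ω y x| := by rw [hskew x y, abs_neg]
        _ = ‖W y x‖ := by rw [hWapp, Real.norm_eq_abs]
        _ ≤ ‖W y‖ * ‖x‖ := (W y).le_opNorm x
        _ = ‖x‖ * ‖W y‖ := mul_comm _ _
    have hxn : (0:ℝ) < ‖x‖ := norm_pos_iff.mpr hx
    -- (1 ⇒): BNormal → equality
    have fwd1 : BNormal x y → |ω x y| = ‖x‖ * anorm ω y := by
      intro hB
      obtain ⟨f, hfb, hfx, hfy⟩ := birkhoff_exists hdim hli hB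
      -- f = c • ω y pointwise with c = ‖x‖ / ω y x
      set c : ℝ := ‖x‖ / ω y x with hcdef
      have hc0 : c ≠ 0 := div_ne_zero (ne_of_gt hxn) hyx
      have hfeq : ∀ z, f z = c * ω y z := by
        intro z
        obtain ⟨a, b, rfl⟩ := pair_span hdim hli z
        rw [map_add, map_smul, map_smul, hfx, hfy, map_add, map_smul, map_smul]
        simp only [smul_eq_mul, mul_zero, add_zero, halt y]
        rw [hcdef]
        field_simp
      -- bound on ‖W y‖
      have hWyb : ‖W y‖ ≤ |ω x y| / ‖x‖ := by
        apply (W y).opNorm_le_bound (by positivity)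
        intro z
        have : |ω y z| = |f z| / |c| := by
          rw [hfeq z, abs_mul, mul_comm, mul_div_assoc, div_self (abs_ne_zero.mpr hc0), mul_one]
        rw [Real.norm_eq_abs, hWapp, this]
        have hcabs : |c| = ‖x‖ / |ω y x| := by
          rw [hcdef, abs_div, abs_norm]
        rw [hcabs, div_div_eq_mul_div, div_le_iff₀ hxn]
        have h1 : |f z| ≤ ‖z‖ := hfb z
        have h2 : |ω y x| = |ω x y| := by rw [hskew y x, abs_neg]
        calc |f z| * |ω y x| = |f z| * |ω x y| := by rw [h2]
          _ ≤ ‖z‖ * |ω x y| := by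
              apply mul_le_mul_of_nonneg_right h1 (abs_nonneg _)
          _ = |ω x y| / ‖x‖ * ‖z‖ * ‖x‖ := by field_simp
      apply le_antisymm hub
      rw [hanorm]
      calc ‖x‖ * ‖W y‖ ≤ ‖x‖ * (|ω x y| / ‖x‖) := by
            apply mul_le_mul_of_nonneg_left hWyb (norm_nonneg x)
        _ = |ω x y| := by field_simp
    -- (1 ⇐): equality → BNormal
    have bwd1 : |ω x y| = ‖x‖ * anorm ω y → BNormal x y := by
      intro heq t
      set s : ℝ := ‖x‖ / ω y x with hsdef
      -- pointwise: ‖x‖ = s * ω y (x + t y) and |s * ω y z| ≤ ‖z‖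
      have hgx : s * ω y (x + t • y) = ‖x‖ := by
        rw [map_add, map_smul]
        simp only [smul_eq_mul, halt y, mul_zero, add_zero]
        rw [hsdef]; field_simp
      have hbound : |s * ω y (x + t • y)| ≤ ‖x + t • y‖ := by
        have h2 : |ω y x| = |ω x y| := by rw [hskew y x, abs_neg]
        have hsabs : |s| = ‖x‖ / |ω x y| := by rw [hsdef, abs_div, abs_norm, h2]
        have hWyn : ‖W y‖ = anorm ω y := (hanorm y).symm
        calc |s * ω y (x + t • y)| = |s| * |ω y (x + t • y)| := abs_mul _ _
          _ = |s| * ‖W y (x + t • y)‖ := by rw [hWapp, Real.norm_eq_abs]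
          _ ≤ |s| * (‖W y‖ * ‖x + t • y‖) := by
              apply mul_le_mul_of_nonneg_left ((W y).le_opNorm _) (abs_nonneg s)
          _ = (‖x‖ / |ω x y|) * anorm ω y * ‖x + t • y‖ := by
              rw [hsabs, hWyn]; ring
          _ = ‖x + t • y‖ := by
              rw [heq]
              have h3 : anorm ω y ≠ 0 := ne_of_gt (hpos y hy)
              field_simp
      calc ‖x‖ = s * ω y (x + t • y) := hgx.symm
        _ ≤ |s * ω y (x + t • y)| := le_abs_self _
        _ ≤ ‖x + t • y‖ := hbound
    -- (2 ⇐): equality → NormalWith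
    have bwd2 : |ω x y| = ‖x‖ * anorm ω y → NormalWith (anorm ω) y x := by
      intro heq t
      set s : ℝ := anorm ω y / ω y x with hsdef
      set u : V := s • x with hudef
      have h2 : |ω y x| = |ω x y| := by rw [hskew y x, abs_neg]
      have hun : ‖u‖ = 1 := by
        rw [hudef, norm_smul, Real.norm_eq_abs, hsdef, abs_div, h2, heq,
          abs_of_pos (hpos y hy)]
        have h3 : anorm ω y ≠ 0 := ne_of_gt (hpos y hy)
        field_simp
      have heval : ω (y + t • x) u = anorm ω y := by
        simp only [hudef, map_add, map_smul, LinearMap.add_apply, LinearMap.smul_apply,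
          smul_eq_mul, halt x, mul_zero, add_zero]
        rw [hsdef]
        field_simp
      have key : anorm ω y ≤ ‖W (y + t • x)‖ := by
        calc anorm ω y = ‖W (y + t • x) u‖ := by
              rw [hWapp, heval, Real.norm_eq_abs, abs_of_pos (hpos y hy)]
          _ ≤ ‖W (y + t • x)‖ * ‖u‖ := (W _).le_opNorm u
          _ = ‖W (y + t • x)‖ := by rw [hun, mul_one]
      calc anorm ω y ≤ ‖W (y + t • x)‖ := key
        _ = anorm ω (y + t • x) := (hanorm _).symm
    -- (2 ⇒): NormalWith → equality
    have fwd2 : NormalWith (anorm ω) y x → |ω x y| = ‖x‖ * anorm ω y := by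
      intro hNW
      have hD : finrank ℝ (V →L[ℝ] ℝ) = 2 := by
        rw [← LinearEquiv.finrank_eq
          (LinearMap.toContinuousLinearMap : (V →ₗ[ℝ] ℝ) ≃ₗ[ℝ] (V →L[ℝ] ℝ)),
          finrank_linearMap, hdim, finrank_self, mul_one]
      have hliD : LinearIndependent ℝ ![W y, W x] := by
        rw [LinearIndependent.pair_iff]
        intro s t hst
        have h1 := congrArg (fun g : V →L[ℝ] ℝ => g x) hst
        have h2 := congrArg (fun g : V →L[ℝ] ℝ => g y) hst
        simp only [ContinuousLinearMap.add_apply, ContinuousLinearMap.coe_smul',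
          Pi.smul_apply, smul_eq_mul, ContinuousLinearMap.zero_apply] at h1 h2
        rw [hWapp, hWapp, halt x] at h1
        rw [hWapp, hWapp, halt y] at h2
        simp only [mul_zero, add_zero, zero_add] at h1 h2
        exact ⟨(mul_eq_zero.mp h1).resolve_right hyx,
               (mul_eq_zero.mp h2).resolve_right hxy⟩
      have hWlin : ∀ t : ℝ, W (y + t • x) = W y + t • W x := by
        intro t
        ext w
        simp only [ContinuousLinearMap.add_apply, ContinuousLinearMap.coe_smul',
          Pi.smul_apply, smul_eq_mul]
        rw [hWapp, hWapp, hWapp, map_add, map_smul, LinearMap.add_apply,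
          LinearMap.smul_apply, smul_eq_mul]
      have hBD : ∀ t : ℝ, ‖W y‖ ≤ ‖W y + t • W x‖ := by
        intro t
        have hh := hNW t
        rw [hanorm, hanorm, hWlin t] at hh
        exact hh
      obtain ⟨Φ, hΦb, hΦy, hΦx⟩ := birkhoff_exists hD hliD hBD
      set s : ℝ := ‖W y‖ / ω y x with hsdef
      set z : V := s • x with hzdef
      have hΦ : ∀ g : V →L[ℝ] ℝ, Φ g = g z := by
        intro g
        obtain ⟨a, b, rfl⟩ := pair_span hD hliD g
        rw [map_add, map_smul, map_smul, hΦy, hΦx]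
        simp only [ContinuousLinearMap.add_apply, ContinuousLinearMap.coe_smul',
          Pi.smul_apply, smul_eq_mul]
        rw [hWapp, hWapp, hzdef, map_smul, map_smul, smul_eq_mul, smul_eq_mul,
          halt x, hsdef]
        field_simp
        ring
      have hz1 : ‖z‖ ≤ 1 := by
        apply NormedSpace.norm_le_dual_bound ℝ z zero_le_one
        intro g
        rw [one_mul, Real.norm_eq_abs, ← hΦ g]
        exact hΦb g
      have h2 : |ω y x| = |ω x y| := by rw [hskew y x, abs_neg]
      have hzn : ‖z‖ = ‖W y‖ * ‖x‖ / |ω x y| := by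
        rw [hzdef, norm_smul, Real.norm_eq_abs, hsdef, abs_div, h2, abs_norm]
        ring
      rw [hzn, div_le_one (abs_pos.mpr hxy)] at hz1
      apply le_antisymm hub
      rw [hanorm]
      linarith
    exact ⟨⟨fwd1, bwd1⟩, ⟨fun h => bwd2 (fwd1 h), fun h => bwd1 (fwd2 h)⟩⟩
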